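/- If 0 < α < 0.25·((4/3)^{3/5} − 1), then f_α(z) = 1 − z^{1/3} + αz < 0 for all z with 1 + 4α < z < (1/(3α))^{3/2}. -/
import Mathlib
set_option maxHeartbeats 1000000


/-- If `0 < α < 0.25·((4/3)^{3/5} − 1)`, then `f_α(z) = 1 − z^{1/3} + αz < 0` for all
`z` with `1 + 4α < z < (1/(3α))^{3/2}`. -/
theorem stmt_12 (α : ℝ) (hα : 0 < α)
    (hα2 : α < 0.25 * ((4/3 : ℝ) ^ ((3:ℝ)/5) - 1)) :
    ∀ z : ℝ, 1 + 4 * α < z → z < (1 / (3 * α)) ^ ((3:ℝ)/2) →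
      1 - z ^ ((1:ℝ)/3) + α * z < 0 := by
  -- Numeric bound: (4/3)^(3/5) < 1.192, hence α < 0.048
  have hb : (4/3 : ℝ) ^ ((3:ℝ)/5) < 1.192 := by
    have h3 : ((4/3 : ℝ) ^ ((3:ℝ)/5))^(5:ℕ) = (4/3:ℝ)^(3:ℕ) := by
      rw [← Real.rpow_natCast ((4/3 : ℝ) ^ ((3:ℝ)/5)) 5, ← Real.rpow_mul (by norm_num),
          ← Real.rpow_natCast (4/3:ℝ) 3]
      norm_num
    by_contra h
    push_neg at h
    have h5 : (1.192:ℝ)^(5:ℕ) ≤ ((4/3 : ℝ) ^ ((3:ℝ)/5))^(5:ℕ) :=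
      pow_le_pow_left₀ (by norm_num) h 5
    rw [h3] at h5
    norm_num at h5
  have hα48 : α < 0.048 := by nlinarith
  intro z hz1 hz2
  have hz0 : (0:ℝ) < z := by nlinarith
  obtain ⟨u, hu⟩ : ∃ w : ℝ, w = z ^ ((1:ℝ)/3) := ⟨_, rfl⟩
  have hu0 : 0 < u := hu ▸ Real.rpow_pos_of_pos hz0 _
  have hucube : u * u * u = z := by
    rw [hu, ← Real.rpow_add hz0, ← Real.rpow_add hz0]
    norm_num
  have ha0 : (0:ℝ) < 1 + 4 * α := by nlinarith
  obtain ⟨u1, hu1⟩ : ∃ w : ℝ, w = (1 + 4 * α) ^ ((1:ℝ)/3) := ⟨_, rfl⟩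
  have hu10 : 0 < u1 := hu1 ▸ Real.rpow_pos_of_pos ha0 _
  have hu1cube : u1 * u1 * u1 = 1 + 4 * α := by
    rw [hu1, ← Real.rpow_add ha0, ← Real.rpow_add ha0]
    norm_num
  have hu1u : u1 < u := by rw [hu1, hu]; exact Real.rpow_lt_rpow (le_of_lt ha0) hz1 (by norm_num)
  have hc0 : (0:ℝ) < 1 / (3 * α) := by positivity
  obtain ⟨u2, hu2⟩ : ∃ w : ℝ, w = (1 / (3 * α)) ^ ((1:ℝ)/2) := ⟨_, rfl⟩
  have hu20 : 0 < u2 := hu2 ▸ Real.rpow_pos_of_pos hc0 _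
  have hu2sq : 3 * α * (u2 * u2) = 1 := by
    have : u2 * u2 = 1 / (3 * α) := by
      rw [hu2, ← Real.rpow_add hc0]; norm_num
    rw [this]; field_simp
  have huu2 : u < u2 := by
    have h := Real.rpow_lt_rpow (le_of_lt hz0) hz2 (show (0:ℝ) < 1/3 by norm_num)
    rw [← Real.rpow_mul (le_of_lt hc0), show ((3:ℝ)/2 * (1/3)) = (1:ℝ)/2 by norm_num] at h
    rw [hu, hu2]; exact h
  -- endpoint 1: g(u1) < 0 via u1 > 1 + α + 4α²
  have hm2 : α^1 * α < α^1 * 0.048 := mul_lt_mul_of_pos_left hα48 (pow_pos hα 1)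
  have hm3 : α^2 * α < α^2 * 0.048 := mul_lt_mul_of_pos_left hα48 (pow_pos hα 2)
  have hm4 : α^3 * α < α^3 * 0.048 := mul_lt_mul_of_pos_left hα48 (pow_pos hα 3)
  have hm5 : α^4 * α < α^4 * 0.048 := mul_lt_mul_of_pos_left hα48 (pow_pos hα 4)
  have hs3 : (1 + α + 4*α^2)^3 < 1 + 4*α := by nlinarith [hm2, hm3, hm4, hm5, hα, hα48]
  have hs : 1 + α + 4 * α^2 < u1 := by
    by_contra hle
    push_neg at hle
    have : u1^3 ≤ (1 + α + 4*α^2)^3 := pow_le_pow_left₀ hu10.le hle 3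
    nlinarith [hu1cube, this, hs3]
  have hg1 : α * (u1 * u1 * u1) - u1 + 1 < 0 := by
    rw [hu1cube]; nlinarith
  -- endpoint 2: g(u2) < 0 via u2 > 3/2
  have hu2big : (3:ℝ)/2 < u2 := by
    by_contra hle
    push_neg at hle
    have hsq : u2 * u2 ≤ (3/2 : ℝ) * (3/2) := mul_le_mul hle hle hu20.le (by norm_num)
    have hsq2 : α * (u2 * u2) ≤ α * ((3/2 : ℝ) * (3/2)) :=
      mul_le_mul_of_nonneg_left hsq hα.le
    linarith [hu2sq, hsq2, hα, hα48]
  have h3u2 : 3 * (α * (u2 * u2 * u2)) = u2 := by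
    calc 3 * (α * (u2 * u2 * u2)) = 3 * α * (u2 * u2) * u2 := by ring
      _ = 1 * u2 := by rw [hu2sq]
      _ = u2 := by ring
  have hg2 : α * (u2 * u2 * u2) - u2 + 1 < 0 := by linarith
  -- convexity of the cubic gives g(u) < 0 between u1 and u2
  have iden : (u2 - u1) * (α * (u * u * u) - u + 1)
      = (u2 - u) * (α * (u1 * u1 * u1) - u1 + 1)
        + (u - u1) * (α * (u2 * u2 * u2) - u2 + 1)
        - α * (u2 - u1) * (u - u1) * (u2 - u) * (u + u1 + u2) := by ring
  have t1 : (u2 - u) * (α * (u1 * u1 * u1) - u1 + 1) < 0 :=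
    mul_neg_of_pos_of_neg (by linarith) hg1
  have t2 : (u - u1) * (α * (u2 * u2 * u2) - u2 + 1) < 0 :=
    mul_neg_of_pos_of_neg (by linarith) hg2
  have t3 : 0 < α * (u2 - u1) * (u - u1) * (u2 - u) * (u + u1 + u2) := by
    apply mul_pos (mul_pos (mul_pos (mul_pos hα (by linarith)) (by linarith)) (by linarith))
    positivity
  have tot : (u2 - u1) * (α * (u * u * u) - u + 1) < 0 := by
    rw [iden]; linarith
  have h21 : 0 < u2 - u1 := by linarith
  have key : α * (u * u * u) - u + 1 < 0 := by nlinarith [tot, h21]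
  calc 1 - z ^ ((1:ℝ)/3) + α * z = α * (u * u * u) - u + 1 := by
        rw [← hu, hucube]; ring
    _ < 0 := key
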